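/- Let S ⊆ ℝ₊ⁿ be compact and convex, and let Γ ⊆ ℝⁿ be a closed convex cone with nonempty interior meeting the open positive orthant. Then the Γ-hull Ŝ_Γ := {x ∈ ℝ₊ⁿ : ⟨x,ξ⟩ ≤ φ_S(ξ) for all ξ ∈ Γ} equals (S − Γ°) ∩ ℝ₊ⁿ, where Γ° = {x : ⟨x,ξ⟩ ≥ 0 for all ξ ∈ Γ} is the dual cone. -/

import Mathlib

/-- Support function of `S`. -/
noncomputable def suppFn {n : ℕ} (S : Set (Fin n → ℝ)) (ξ : Fin n → ℝ) : ℝ :=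
  sSup ((fun s => ∑ j, s j * ξ j) '' S)

open Pointwise

/-- Euclidean space, abbreviation. -/
private abbrev Eu (n : ℕ) := EuclideanSpace ℝ (Fin n)

/-- The `Γ`-hull `Ŝ_Γ = {x ∈ ℝ₊ⁿ : ⟨x,ξ⟩ ≤ φ_S(ξ) ∀ξ ∈ Γ}` equals `(S − Γ°) ∩ ℝ₊ⁿ`. -/
theorem stmt_12 {n : ℕ} (S : Set (Fin n → ℝ)) (hc : IsCompact S) (hconv : Convex ℝ S)
    (hne : S.Nonempty) (hpos : ∀ s ∈ S, ∀ i, 0 ≤ s i)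
    (Γ : Set (Fin n → ℝ)) (hΓc : IsClosed Γ) (hΓconv : Convex ℝ Γ)
    (hcone : ∀ t : ℝ, 0 ≤ t → ∀ ξ ∈ Γ, t • ξ ∈ Γ)
    (hint : (interior Γ ∩ {ξ : Fin n → ℝ | ∀ j, 0 < ξ j}).Nonempty) :
    {x : Fin n → ℝ | (∀ i, 0 ≤ x i) ∧ ∀ ξ ∈ Γ, ∑ j, x j * ξ j ≤ suppFn S ξ} =
      {x : Fin n → ℝ | ∃ s ∈ S, ∃ t : Fin n → ℝ,
        (∀ ξ ∈ Γ, 0 ≤ ∑ j, t j * ξ j) ∧ x = s - t} ∩ {x | ∀ i, 0 ≤ x i} := by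
  classical
  -- basic facts
  have hΓne : Γ.Nonempty := by
    obtain ⟨ξ, hξ, -⟩ := hint
    exact ⟨ξ, interior_subset hξ⟩
  have h0Γ : (0 : Fin n → ℝ) ∈ Γ := by
    obtain ⟨ξ, hξ⟩ := hΓne
    simpa using hcone 0 le_rfl ξ hξ
  have hinner : ∀ x ξ : Eu n, (inner ℝ x ξ : ℝ) = ∑ j, x j * ξ j := by
    intro x ξ; simp [PiLp.inner_apply, mul_comm]
  -- Γ as a convex cone in Eu n
  let K : ConvexCone ℝ (Eu n) :=
    { carrier := WithLp.ofLp ⁻¹' Γ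
      smul_mem' := fun c hc x hx => by simpa using hcone c hc.le _ hx
      add_mem' := fun x hx y hy => by
        show WithLp.ofLp (x + y) ∈ Γ
        rw [WithLp.ofLp_add]
        have h1 : (1/2 : ℝ) • x.ofLp + (1/2 : ℝ) • y.ofLp ∈ Γ :=
          hΓconv hx hy (by norm_num) (by norm_num) (by norm_num)
        have h2 := hcone 2 (by norm_num) _ h1
        have h3 : (2 : ℝ) • ((1/2 : ℝ) • x.ofLp + (1/2 : ℝ) • y.ofLp) = x.ofLp + y.ofLp := by
          rw [smul_add, smul_smul, smul_smul]; norm_num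
        rwa [h3] at h2 }
  have hKne : (K : Set (Eu n)).Nonempty := ⟨0, show WithLp.ofLp (0 : Eu n) ∈ Γ from h0Γ⟩
  have hKc : IsClosed (K : Set (Eu n)) := hΓc.preimage (PiLp.continuous_ofLp _ _)
  let KP : ProperCone ℝ (Eu n) :=
    { toSubmodule := K.toPointedCone (show WithLp.ofLp (0 : Eu n) ∈ Γ from h0Γ), isClosed' := hKc }
  -- the dual cone Γ°
  set T : Set (Eu n) := (ProperCone.innerDual (K : Set (Eu n)) : Set (Eu n)) with hT
  have hTmem : ∀ t : Eu n, t ∈ T ↔ ∀ ξ ∈ Γ, 0 ≤ ∑ j, t j * ξ j := by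
    intro t
    constructor
    · intro h ξ hξ
      have h2 := ProperCone.mem_innerDual.1 h (x := WithLp.toLp 2 ξ) hξ
      rw [hinner] at h2
      calc (0:ℝ) ≤ ∑ j, ξ j * t j := by simpa using h2
        _ = ∑ j, t j * ξ j := by simp [mul_comm]
    · intro h
      refine ProperCone.mem_innerDual.2 fun ξ hξ => ?_
      rw [hinner]
      calc (0:ℝ) ≤ ∑ j, t j * ξ j := h ξ hξ
        _ = ∑ j, ξ j * t j := by simp [mul_comm]
  have h0T : (0 : Eu n) ∈ T := ProperCone.mem_innerDual.2 fun _ _ => by simp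
  -- the set D = S - Γ°
  let S' : Set (Eu n) := WithLp.ofLp ⁻¹' S
  set D : Set (Eu n) := S' + (-T) with hD
  have hDclosed : IsClosed D := by
    have h1 : IsClosed (-T) := (ProperCone.innerDual (K : Set (Eu n))).isClosed.neg
    exact h1.add_left_of_isCompact ((PiLp.homeomorph 2 _).isCompact_preimage.2 hc : IsCompact S')
  have hDconv : Convex ℝ D := by
    have h1 : Convex ℝ T := (ProperCone.innerDual (K : Set (Eu n))).convex
    exact (hconv.linear_preimage (WithLp.linearEquiv 2 ℝ (Fin n → ℝ)).toLinearMap :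
      Convex ℝ S').add h1.neg
  -- membership in D
  have hmemD : ∀ s : Eu n, s ∈ S' → ∀ t : Eu n, t ∈ T → s - t ∈ D := by
    intro s hs t ht
    exact ⟨s, hs, -t, Set.neg_mem_neg.2 ht, by abel_nf⟩
  -- support function bound
  have hbdd : ∀ ξ : Fin n → ℝ, BddAbove ((fun s => ∑ j, s j * ξ j) '' S) := by
    intro ξ
    have hcont : Continuous (fun s : Fin n → ℝ => ∑ j, s j * ξ j) :=
      continuous_finset_sum _ fun j _ => (continuous_apply j).mul continuous_const
    exact (hc.image hcont).bddAbove
  ext x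
  simp only [Set.mem_setOf_eq, Set.mem_inter_iff]
  constructor
  · rintro ⟨hx0, hxle⟩
    refine ⟨?_, hx0⟩
    -- show (x : Eu n) ∈ D, then unpack
    have hxD : (WithLp.toLp 2 x : Eu n) ∈ D := by
      by_contra hxD
      obtain ⟨f, u, hfD, hfx⟩ := geometric_hahn_banach_closed_point hDconv hDclosed hxD
      set y : Eu n := (InnerProductSpace.toDual ℝ (Eu n)).symm f with hy
      have hyapp : ∀ z : Eu n, (inner ℝ y z : ℝ) = f z := fun z =>
        InnerProductSpace.toDual_symm_apply
      obtain ⟨s₀, hs₀⟩ : S'.Nonempty := by obtain ⟨s, hs⟩ := hne; exact ⟨WithLp.toLp 2 s, hs⟩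
      have hs₀D : s₀ ∈ D := by
        simpa using hmemD s₀ hs₀ 0 h0T
      have hfs₀ : f s₀ < u := hfD _ hs₀D
      -- y belongs to the double dual of Γ, hence to Γ
      have hyΓ : y.ofLp ∈ Γ := by
        have hmem : y ∈ (ProperCone.innerDual T : Set (Eu n)) := by
          refine ProperCone.mem_innerDual.2 fun t ht => ?_
          by_contra hneg
          push_neg at hneg
          have hty : (inner ℝ y t : ℝ) < 0 := by rwa [real_inner_comm] at hneg
          set c : ℝ := (u - f s₀ + 1) / (-(inner ℝ y t : ℝ)) with hcdef
          have hcpos : 0 < c := div_pos (by linarith) (by linarith)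
          have hctT : c • t ∈ T := ProperCone.mem_innerDual.2 fun x hx => by
            rw [inner_smul_right]; exact mul_nonneg hcpos.le (ProperCone.mem_innerDual.1 ht hx)
          have hsub : s₀ - c • t ∈ D := hmemD s₀ hs₀ _ hctT
          have hlt := hfD _ hsub
          have hfval : f (s₀ - c • t) = f s₀ - c * (inner ℝ y t : ℝ) := by
            rw [map_sub, map_smul, smul_eq_mul, hyapp]
          rw [hfval] at hlt
          have hcmul : c * (-(inner ℝ y t : ℝ)) = u - f s₀ + 1 := by
            rw [hcdef, div_mul_cancel₀]
            linarith
          nlinarith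
        have hbip := ProperCone.innerDual_innerDual KP
        have hmem2 : y ∈ (ProperCone.innerDual (ProperCone.innerDual (KP : Set (Eu n)) :
            Set (Eu n)) : Set (Eu n)) := hmem
        rw [hbip] at hmem2
        exact hmem2
      -- derive contradiction from the support bound
      have hsupp : suppFn S y.ofLp ≤ u := by
        apply csSup_le (hne.image _)
        rintro _ ⟨s, hs, rfl⟩
        have hsD : WithLp.toLp 2 s ∈ D := by simpa using hmemD (WithLp.toLp 2 s) hs 0 h0T
        have hlt := hfD _ hsD
        have heq : (∑ j, s j * y j : ℝ) = f (WithLp.toLp 2 s) := by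
          rw [show (∑ j, s j * y j : ℝ) = ∑ j, (WithLp.toLp 2 s) j * y j by simp,
            ← hinner, real_inner_comm]; exact hyapp _
        show (∑ j, s j * y j : ℝ) ≤ u
        rw [heq]; exact hlt.le
      have hle := hxle y.ofLp hyΓ
      have hxeq : (∑ j, x j * y j : ℝ) = f (WithLp.toLp 2 x) := by
        rw [show (∑ j, x j * y j : ℝ) = ∑ j, (WithLp.toLp 2 x) j * y j by simp,
          ← hinner, real_inner_comm]; exact hyapp _
      linarith
    obtain ⟨s, hs, nt, hnt, hsum⟩ := hxD
    refine ⟨s.ofLp, hs, -nt.ofLp, ?_, ?_⟩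
    · intro ξ hξ
      have hmnt : -nt ∈ T := by simpa using hnt
      simpa using (hTmem (-nt)).1 hmnt ξ hξ
    · rw [sub_neg_eq_add]
      simpa using (congrArg WithLp.ofLp hsum).symm
  · rintro ⟨⟨s, hs, t, ht, rfl⟩, hx0⟩
    refine ⟨hx0, fun ξ hξ => ?_⟩
    have h1 : (∑ j, (s - t) j * ξ j : ℝ) = (∑ j, s j * ξ j) - ∑ j, t j * ξ j := by
      simp [sub_mul, Finset.sum_sub_distrib]
    have h2 : (∑ j, s j * ξ j : ℝ) ≤ suppFn S ξ :=
      le_csSup (hbdd ξ) (Set.mem_image_of_mem _ hs)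
    have h3 := ht ξ hξ
    rw [h1]
    linarith
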